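/- Let Δ₁,…,Δ_t be a ladder of integer segments and let 𝔪 be the multiset {Δ₁,…,Δ_t}. Then 𝔪 is of Speh type if and only if t is even and Δ_{2i−1} = νΔ_{2i} for every 1 ≤ i ≤ t/2. -/

import Mathlib

set_option maxHeartbeats 1000000

/-- An integer segment `[a,b]` with `a ≤ b`; `left` is its beginning, `right` is its end. -/
structure Segment where
  left : ℤ
  right : ℤ
  le : left ≤ right

/-- `ν[a,b] = [a+1,b+1]`. -/
def Segment.nu (Δ : Segment) : Segment :=
  ⟨Δ.left + 1, Δ.right + 1, by have := Δ.le; omega⟩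

/-- A multiset of segments is of Speh type if it equals `𝔪' + ν𝔪'` for some `𝔪'`. -/
def SpehType (m : Multiset Segment) : Prop :=
  ∃ m' : Multiset Segment, m = m' + m'.map Segment.nu

lemma Segment.nu_left (s : Segment) : s.nu.left = s.left + 1 := rfl

/-- Drop the first two entries of a `Fin (n+2)`-indexed family. -/
def finShift {α : Type*} {n : ℕ} (f : Fin (n + 2) → α) : Fin n → α :=
  fun i => f ⟨i.val + 2, by omega⟩

lemma ofFn_split {α : Type*} {n : ℕ} (f : Fin (n + 2) → α) :
    List.ofFn f = f ⟨0, by omega⟩ :: f ⟨1, by omega⟩ :: List.ofFn (finShift f) := by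
  rw [List.ofFn_succ, List.ofFn_succ]
  refine congrArg₂ _ (congrArg f (Fin.ext (by simp))) ?_
  refine congrArg₂ _ (congrArg f (Fin.ext (by simp))) ?_
  refine congrArg List.ofFn (funext fun i => congrArg f (Fin.ext ?_))
  simp [finShift, Fin.val_succ]

lemma speh_aux : ∀ t (Δ : Fin t → Segment),
    (∀ i j : Fin t, i < j →
      (Δ j).left < (Δ i).left ∧ (Δ j).right < (Δ i).right) →
    (SpehType ↑(List.ofFn Δ) ↔
      (Even t ∧ ∀ (i : ℕ) (h : 2 * i + 1 < t),
        Δ ⟨2 * i, Nat.lt_of_succ_lt h⟩ = (Δ ⟨2 * i + 1, h⟩).nu)) := by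
  intro t
  induction t using Nat.strong_induction_on with
  | _ t ih =>
    match t with
    | 0 =>
      intro Δ _
      constructor
      · intro _
        exact ⟨Even.zero, fun i h => absurd h (by omega)⟩
      · intro _
        exact ⟨0, by simp⟩
    | 1 =>
      intro Δ _
      constructor
      · rintro ⟨m', hm⟩
        exfalso
        have hc : (1 : ℕ) = Multiset.card m' + Multiset.card m' := by
          have := congrArg Multiset.card hm
          simpa using this
        omega
      · rintro ⟨he, -⟩
        exact absurd he (by decide)
    | (n+2) =>
      intro Δ hladder
      have hlad' : ∀ i j : Fin n, i < j →
          ((finShift Δ) j).left < ((finShift Δ) i).left ∧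
          ((finShift Δ) j).right < ((finShift Δ) i).right := by
        intro i j hij
        have hv := Fin.lt_def.mp hij
        exact hladder ⟨i.val + 2, by omega⟩ ⟨j.val + 2, by omega⟩
          (Fin.mk_lt_mk.mpr (by omega))
      have ih' := ih n (by omega) (finShift Δ) hlad'
      have hsplit : (↑(List.ofFn Δ) : Multiset Segment)
          = Δ ⟨0, by omega⟩ ::ₘ Δ ⟨1, by omega⟩ ::ₘ ↑(List.ofFn (finShift Δ)) := by
        rw [ofFn_split Δ]; rfl
      have h01 : (Δ ⟨1, by omega⟩).left < (Δ ⟨0, by omega⟩).left :=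
        (hladder ⟨0, by omega⟩ ⟨1, by omega⟩ (Fin.mk_lt_mk.mpr (by omega))).1
      have hmax : ∀ s ∈ (↑(List.ofFn Δ) : Multiset Segment),
          s.left ≤ (Δ ⟨0, by omega⟩).left := by
        intro s hs
        rw [Multiset.mem_coe, List.mem_ofFn] at hs
        obtain ⟨i, rfl⟩ := hs
        by_cases hi : i.val = 0
        · have : i = ⟨0, by omega⟩ := Fin.ext hi
          rw [this]
        · have hlt : (⟨0, by omega⟩ : Fin (n+2)) < i := by
            rw [Fin.lt_def]; exact Nat.pos_of_ne_zero hi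
          exact (hladder ⟨0, by omega⟩ i hlt).1.le
      constructor
      · rintro ⟨m', hm⟩
        have hmem0 : Δ ⟨0, by omega⟩ ∈ m' + m'.map Segment.nu := by
          rw [← hm, hsplit]; exact Multiset.mem_cons_self _ _
        have hnotm' : Δ ⟨0, by omega⟩ ∉ m' := by
          intro hmem
          have hnum : (Δ ⟨0, by omega⟩).nu ∈ (↑(List.ofFn Δ) : Multiset Segment) := by
            rw [hm]
            exact Multiset.mem_add.mpr (Or.inr (Multiset.mem_map_of_mem _ hmem))
          have := hmax _ hnum
          rw [Segment.nu_left] at this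
          omega
        obtain ⟨s, hs_mem, hs_eq⟩ : ∃ s ∈ m', s.nu = Δ ⟨0, by omega⟩ := by
          rcases Multiset.mem_add.mp hmem0 with h | h
          · exact absurd h hnotm'
          · exact Multiset.mem_map.mp h
        have hs_left : s.left + 1 = (Δ ⟨0, by omega⟩).left := by
          rw [← hs_eq, Segment.nu_left]
        have hs_in : s ∈ (↑(List.ofFn Δ) : Multiset Segment) := by
          rw [hm]; exact Multiset.mem_add.mpr (Or.inl hs_mem)
        rw [Multiset.mem_coe, List.mem_ofFn] at hs_in
        obtain ⟨j, hj⟩ := hs_in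
        have hj1 : j = ⟨1, by omega⟩ := by
          by_contra hne
          rcases Nat.lt_trichotomy j.val 1 with h | h | h
          · have hj0 : j = ⟨0, by omega⟩ := Fin.ext (by simp only [Fin.val_mk]; omega)
            rw [hj0] at hj
            have hl := congrArg Segment.left hj
            linarith [hl, hs_left]
          · exact hne (Fin.ext h)
          · have hlt : (⟨1, by omega⟩ : Fin (n+2)) < j := by
              rw [Fin.lt_def]; simp; omega
            have := (hladder ⟨1, by omega⟩ j hlt).1
            rw [hj] at this
            linarith [hs_left, h01, this]
        rw [hj1] at hj
        have hΔ01 : Δ ⟨0, by omega⟩ = (Δ ⟨1, by omega⟩).nu := by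
          rw [← hs_eq, hj]
        have h1m' : Δ ⟨1, by omega⟩ ∈ m' := hj ▸ hs_mem
        obtain ⟨c, hc⟩ := Multiset.exists_cons_of_mem h1m'
        have hrest : (↑(List.ofFn (finShift Δ)) : Multiset Segment)
            = c + c.map Segment.nu := by
          have key : Δ ⟨0, by omega⟩ ::ₘ Δ ⟨1, by omega⟩ ::ₘ
                (↑(List.ofFn (finShift Δ)) : Multiset Segment)
              = Δ ⟨0, by omega⟩ ::ₘ Δ ⟨1, by omega⟩ ::ₘ (c + c.map Segment.nu) := by
            rw [← hsplit, hm, hc, Multiset.map_cons, ← hΔ01]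
            rw [← Multiset.singleton_add, ← Multiset.singleton_add, ← Multiset.singleton_add,
              ← Multiset.singleton_add]
            abel
          exact (Multiset.cons_inj_right _).mp ((Multiset.cons_inj_right _).mp key)
        obtain ⟨hEn, hpair'⟩ := ih'.mp ⟨c, hrest⟩
        refine ⟨?_, ?_⟩
        · obtain ⟨k, hk⟩ := hEn; exact ⟨k + 1, by omega⟩
        · intro i h
          match i with
          | 0 =>
            have e0 : (⟨2 * 0, by omega⟩ : Fin (n+2)) = ⟨0, by omega⟩ :=
              Fin.mk_eq_mk.mpr (by omega)
            have e1 : (⟨2 * 0 + 1, h⟩ : Fin (n+2)) = ⟨1, by omega⟩ :=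
              Fin.mk_eq_mk.mpr (by omega)
            rw [e0, e1]; exact hΔ01
          | (j+1) =>
            have hp := hpair' j (by omega)
            simp only [finShift] at hp
            have e0 : (⟨2 * (j+1), by omega⟩ : Fin (n+2)) = ⟨2 * j + 2, by omega⟩ :=
              Fin.mk_eq_mk.mpr (by omega)
            have e1 : (⟨2 * (j+1) + 1, h⟩ : Fin (n+2)) = ⟨2 * j + 1 + 2, by omega⟩ :=
              Fin.mk_eq_mk.mpr (by omega)
            rw [e0, e1]; exact hp
      · rintro ⟨hEt, hpair⟩
        have hΔ01 : Δ ⟨0, by omega⟩ = (Δ ⟨1, by omega⟩).nu := by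
          have hp := hpair 0 (by omega)
          have e0 : (⟨2 * 0, by omega⟩ : Fin (n+2)) = ⟨0, by omega⟩ :=
            Fin.mk_eq_mk.mpr (by omega)
          have e1 : (⟨2 * 0 + 1, by omega⟩ : Fin (n+2)) = ⟨1, by omega⟩ :=
            Fin.mk_eq_mk.mpr (by omega)
          rw [e0, e1] at hp; exact hp
        have hEn : Even n := by obtain ⟨k, hk⟩ := hEt; exact ⟨k - 1, by omega⟩
        have hpair' : ∀ (j : ℕ) (hj : 2 * j + 1 < n),
            (finShift Δ) ⟨2 * j, by omega⟩ = ((finShift Δ) ⟨2 * j + 1, hj⟩).nu := by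
          intro j hj
          have hp := hpair (j + 1) (by omega)
          simp only [finShift]
          have e0 : (⟨2 * (j+1), by omega⟩ : Fin (n+2)) = ⟨2 * j + 2, by omega⟩ :=
            Fin.mk_eq_mk.mpr (by omega)
          have e1 : (⟨2 * (j+1) + 1, by omega⟩ : Fin (n+2)) = ⟨2 * j + 1 + 2, by omega⟩ :=
            Fin.mk_eq_mk.mpr (by omega)
          rw [e0, e1] at hp; exact hp
        obtain ⟨c, hc⟩ := ih'.mpr ⟨hEn, hpair'⟩
        refine ⟨Δ ⟨1, by omega⟩ ::ₘ c, ?_⟩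
        rw [hsplit, hc, Multiset.map_cons, ← hΔ01]
        rw [← Multiset.singleton_add, ← Multiset.singleton_add, ← Multiset.singleton_add,
          ← Multiset.singleton_add]
        abel

/-- for a ladder `Δ₁,…,Δ_t`, the multiset `{Δ₁,…,Δ_t}` is of Speh type
iff `t` is even and `Δ_{2i−1} = νΔ_{2i}` for all `1 ≤ i ≤ t/2` (here written 0-indexed). -/
theorem speh_type_iff_pairs_of_ladder (t : ℕ) (Δ : Fin t → Segment)
    (hladder : ∀ i j : Fin t, i < j →
      (Δ j).left < (Δ i).left ∧ (Δ j).right < (Δ i).right) :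
    SpehType (Finset.univ.val.map Δ) ↔
      (Even t ∧ ∀ (i : ℕ) (h : 2 * i + 1 < t),
        Δ ⟨2 * i, by omega⟩ = (Δ ⟨2 * i + 1, h⟩).nu) := by
  have huniv : (Finset.univ.val.map Δ) = ↑(List.ofFn Δ) := by
    simp [Fin.univ_def, List.ofFn_eq_map]
  rw [huniv]
  exact speh_aux t Δ hladder
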